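/- arXiv:0804.1382 — 2 statements merged into one kernel-verified Lean document; each statement's English description precedes it below -/
import Mathlib

section
/- (Power control, strong interference.) Let a ≥ 1 and let P̄1 ≥ 0, P̄2 > a − 1 be power constraints. Then for all P1 with 0 ≤ P1 ≤ P̄1 and all P2 with 0 ≤ P2 ≤ P̄2, R_s(a, P1, P2) ≤ R_s(a, min(P̄1, a−1), P̄2); that is, the secrecy rate is maximized by the power allocation (min{P̄1, a−1}, P̄2). -/
set_option maxHeartbeats 1000000


/-- `g x = (1/2) * log₂ (1 + x)` -/
noncomputable def g (x : ℝ) : ℝ := (1/2) * Real.logb 2 (1 + x)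

/-- Achievable secrecy rate of the symmetric Gaussian wiretap channel
with a helping interferer. -/
noncomputable def Rs (a P1 P2 : ℝ) : ℝ :=
  if 1 + P2 ≤ a then 0
  else if 1 ≤ a then
    if P1 < P2 ∧ 1 + P1 < a then g P1 - g (a * P1 / (1 + P2))
    else if P1 < P2 ∧ a ≤ 1 + P1 then g (P1 + a * P2) - g (a * P1 + P2)
    else 0
  else
    if P2 < P1 then g (P1 / (1 + a * P2)) - g (a * P1 / (1 + P2))
    else g P1 - g (a * P1)

lemma g_zero : g 0 = 0 := by simp [g]

lemma g_sub_le {u v u' v' : ℝ} (hu : 0 ≤ u) (hv : 0 ≤ v) (hu' : 0 ≤ u') (hv' : 0 ≤ v')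
    (h : (1+u) * (1+v') ≤ (1+u') * (1+v)) : g u - g v ≤ g u' - g v' := by
  have p1 : (0:ℝ) < 1 + u := by linarith
  have p2 : (0:ℝ) < 1 + v := by linarith
  have p3 : (0:ℝ) < 1 + u' := by linarith
  have p4 : (0:ℝ) < 1 + v' := by linarith
  have h1 : Real.logb 2 ((1+u)*(1+v')) ≤ Real.logb 2 ((1+u')*(1+v)) :=
    Real.logb_le_logb_of_le one_lt_two (by positivity) h
  rw [Real.logb_mul p1.ne' p4.ne', Real.logb_mul p3.ne' p2.ne'] at h1
  unfold g; linarith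

lemma g_sub_nonneg {u v : ℝ} (hv : 0 ≤ v) (h : v ≤ u) : 0 ≤ g u - g v := by
  have := g_sub_le (le_refl (0:ℝ)) (le_refl (0:ℝ)) (hv.trans h) hv
    (by nlinarith)
  simpa [g_zero] using this

/-- Power control, strong interference: for `a ≥ 1` and `P̄2 > a - 1`,
the secrecy rate is maximized by the allocation `(min P̄1 (a-1), P̄2)`. -/
theorem powerControl_strong (a Pbar1 Pbar2 : ℝ) (ha : 1 ≤ a)
    (hP1 : 0 ≤ Pbar1) (hP2 : a - 1 < Pbar2) :
    ∀ P1 P2 : ℝ, 0 ≤ P1 → P1 ≤ Pbar1 → 0 ≤ P2 → P2 ≤ Pbar2 →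
      Rs a P1 P2 ≤ Rs a (min Pbar1 (a - 1)) Pbar2 := by
  intro P1 P2 h1n h1le h2n h2le
  have hb2 : (0:ℝ) < Pbar2 := by linarith
  have hpb : (0:ℝ) < 1 + Pbar2 := by linarith
  have hna : a < 1 + Pbar2 := by linarith
  have hp : (0:ℝ) < 1 + P2 := by linarith
  have e1 : 1 + a*P1/(1+P2) = (1+P2+a*P1)/(1+P2) := by field_simp
  have e2 : 1 + a*Pbar1/(1+Pbar2) = (1+Pbar2+a*Pbar1)/(1+Pbar2) := by field_simp
  rcases le_or_gt (a-1) Pbar1 with hA | hB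
  · -- case A : min = a - 1, RHS uses branch (ii)
    have hmin : min Pbar1 (a-1) = a - 1 := min_eq_right hA
    have hRHS : Rs a (min Pbar1 (a-1)) Pbar2
        = g ((a-1) + a*Pbar2) - g (a*(a-1) + Pbar2) := by
      rw [hmin, Rs, if_neg (by linarith), if_pos ha,
        if_neg (by rintro ⟨-, h⟩; linarith),
        if_pos ⟨by linarith, by linarith⟩]
    rw [hRHS, Rs]
    have hz : 0 ≤ g ((a-1) + a*Pbar2) - g (a*(a-1) + Pbar2) :=
      g_sub_nonneg (by nlinarith) (by nlinarith)
    split_ifs with c1 c2 c3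
    · exact hz
    · -- branch (i): g P1 - g (a P1/(1+P2)) ≤ RHS
      have hc1 : a < 1 + P2 := not_le.1 c1
      apply g_sub_le h1n (by positivity) (by nlinarith) (by nlinarith)
      rw [e1, ← mul_div_assoc, le_div_iff₀ hp]
      nlinarith [mul_nonneg (mul_nonneg (mul_nonneg (by linarith : (0:ℝ) ≤ 1+P1)
          (by nlinarith : (0:ℝ) ≤ a*P1)) (by linarith : (0:ℝ) ≤ Pbar2 - P2))
          (by nlinarith : (0:ℝ) ≤ 1 + (a*(a-1)+Pbar2)),
        mul_nonneg (mul_nonneg (mul_nonneg hpb.le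
          (by linarith [c2.2] : (0:ℝ) ≤ a - 1 - P1)) (by linarith : (0:ℝ) ≤ 1+Pbar2-a))
          (by nlinarith : (0:ℝ) ≤ 1+P2+a*P1),
        mul_pos hpb (by nlinarith : (0:ℝ) < 1+Pbar2+a*P1)]
    · -- branch (ii): g (P1+aP2) - g (aP1+P2) ≤ RHS
      have hc1 : a < 1 + P2 := not_le.1 c1
      obtain ⟨hlt, hge⟩ := c3
      apply g_sub_le (by nlinarith) (by nlinarith) (by nlinarith) (by nlinarith)
      nlinarith [mul_nonneg (mul_nonneg (mul_nonneg (by linarith : (0:ℝ) ≤ Pbar2 - P2)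
          (by linarith : (0:ℝ) ≤ a-1)) (by nlinarith : (0:ℝ) ≤ 1+(a+1)*P1))
          (by nlinarith : (0:ℝ) ≤ 1 + (a*(a-1)+Pbar2)),
        mul_nonneg (mul_nonneg (mul_nonneg (by linarith : (0:ℝ) ≤ P1-(a-1))
          (by linarith : (0:ℝ) ≤ a-1)) (by nlinarith : (0:ℝ) ≤ 1+(a+1)*Pbar2))
          (by nlinarith : (0:ℝ) ≤ 1+a*P1+P2),
        (by nlinarith : (0:ℝ) < 1+a*P1+Pbar2)]
    · exact hz
  · -- case B : min = Pbar1, Pbar1 < a-1, RHS uses branch (i)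
    have hmin : min Pbar1 (a-1) = Pbar1 := min_eq_left hB.le
    have hRHS : Rs a (min Pbar1 (a-1)) Pbar2
        = g Pbar1 - g (a*Pbar1/(1+Pbar2)) := by
      rw [hmin, Rs, if_neg (by linarith), if_pos ha,
        if_pos ⟨by linarith, by linarith⟩]
    rw [hRHS, Rs]
    have hz : 0 ≤ g Pbar1 - g (a*Pbar1/(1+Pbar2)) := by
      apply g_sub_nonneg (by positivity)
      rw [div_le_iff₀ hpb]; nlinarith
    split_ifs with c1 c2 c3
    · exact hz
    · -- branch (i)
      have hc1 : a < 1 + P2 := not_le.1 c1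
      apply g_sub_le h1n (by positivity) hP1 (by positivity)
      rw [e1, e2, ← mul_div_assoc, ← mul_div_assoc, div_le_div_iff₀ hpb hp]
      nlinarith [mul_nonneg (mul_nonneg (mul_nonneg (by linarith : (0:ℝ) ≤ 1+P1)
          (by nlinarith : (0:ℝ) ≤ a*P1)) (by linarith : (0:ℝ) ≤ Pbar2 - P2))
          (by nlinarith : (0:ℝ) ≤ 1+Pbar2+a*Pbar1),
        mul_nonneg (mul_nonneg (mul_nonneg hpb.le
          (by linarith : (0:ℝ) ≤ Pbar1 - P1)) (by linarith : (0:ℝ) ≤ 1+Pbar2-a))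
          (by nlinarith : (0:ℝ) ≤ 1+P2+a*P1),
        mul_pos hpb (by nlinarith : (0:ℝ) < 1+Pbar2+a*P1)]
    · -- branch (ii): impossible since P1 ≤ Pbar1 < a-1 contradicts a ≤ 1+P1
      exact absurd c3.2 (by linarith)
    · exact hz
end

section
/- Let 0 < a < 1, P1 > 0 and P2 ≥ 0 be real numbers. Then R_s(a, P1, P2) > 0; that is, in the weak-interference regime a < 1 a strictly positive secrecy rate is achievable for any positive transmit power and any interferer power. -/
lemma g_strictMono {x y : ℝ} (hx : 0 ≤ x) (hxy : x < y) : g x < g y := by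
  unfold g
  have h1 : (0:ℝ) < 1 + x := by linarith
  have := Real.logb_lt_logb (b:=2) (by norm_num) h1 (by linarith : 1 + x < 1 + y)
  linarith

/-- In the weak-interference regime `0 < a < 1`, a strictly positive secrecy
rate is achievable for any positive transmit power and any interferer power. -/
theorem positive_rate_weak (a P1 P2 : ℝ) (ha0 : 0 < a) (ha1 : a < 1)
    (hP1 : 0 < P1) (hP2 : 0 ≤ P2) :
    0 < Rs a P1 P2 := by
  unfold Rs
  rw [if_neg (by linarith), if_neg (by linarith)]
  by_cases h : P2 < P1
  · rw [if_pos h]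
    have hd1 : (0:ℝ) < 1 + a * P2 := by positivity
    have hd2 : (0:ℝ) < 1 + P2 := by linarith
    have hle : 0 ≤ a * P1 / (1 + P2) := by positivity
    have hlt : a * P1 / (1 + P2) < P1 / (1 + a * P2) := by
      rw [div_lt_div_iff₀ hd2 hd1]
      nlinarith [mul_pos hP1 (sub_pos.mpr ha1), mul_nonneg (mul_nonneg hP1.le hP2) (sub_pos.mpr (by nlinarith : a * a < 1)).le]
    linarith [g_strictMono hle hlt]
  · rw [if_neg h]
    have : a * P1 < P1 := by nlinarith
    linarith [g_strictMono (by positivity) this]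
end
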